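/- Every element of P¹(F_{3^n}) is eventually periodic under θ: for each x there exist integers i ≥ 0 and k ≥ 1 with θ^{i+k}(x) = θ^i(x). Moreover, the least such i (the preperiod) is at most e, where 2^e ∥ 3^n − 1. -/

import Mathlib

open OnePoint

variable (F : Type*) [Field F] [DecidableEq F]

/-- The map `θ(x) = x + x⁻¹`, with `θ(0) = θ(∞) = ∞`. -/
def theta : OnePoint F → OnePoint F
  | Option.some x => if x = 0 then ∞ else Option.some (x + x⁻¹)
  | Option.none => ∞

/-- The inverse-square map `s(x) = x⁻²`, with `s(0) = ∞`, `s(∞) = 0`. -/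
def sMap : OnePoint F → OnePoint F
  | Option.some x => if x = 0 then ∞ else Option.some (x⁻¹ ^ 2)
  | Option.none => Option.some 0

/-- The involution `ψ(x) = (x+1)/(x-1)`, with `ψ(1) = ∞`, `ψ(∞) = 1`. -/
def psi : OnePoint F → OnePoint F
  | Option.some x => if x = 1 then ∞ else Option.some ((x + 1) / (x - 1))
  | Option.none => Option.some 1

section Aux

set_option linter.unusedSectionVars false

variable {F}

@[simp] lemma op_eq_iff (x y : Option F) : (@Eq (OnePoint F) x y) ↔ x = y := Iff.rfl

@[simp] lemma op_ite (c : Prop) [Decidable c] (y : Option F) :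
    (@ite (OnePoint F) c _ ∞ y) = (@ite (Option F) c _ Option.none y) := rfl

lemma onePoint_cases (y : OnePoint F) : y = Option.none ∨ ∃ a : F, y = Option.some a :=
  Option.casesOn y (Or.inl rfl) (fun a => Or.inr ⟨a, rfl⟩)

lemma infty_eq : (∞ : OnePoint F) = Option.none := rfl

lemma psi_psi (h2 : (2:F) ≠ 0) (x : OnePoint F) : psi F (psi F x) = x := by
  rcases onePoint_cases x with rfl | ⟨a, rfl⟩
  · simp [psi, infty_eq]
  · by_cases ha : a = 1
    · subst ha; simp [psi, infty_eq]
    · have ha' : a - 1 ≠ 0 := sub_ne_zero.mpr ha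
      have hb : (a + 1) / (a - 1) ≠ 1 := by
        intro h
        rw [div_eq_one_iff_eq ha'] at h
        exact h2 (by linear_combination h)
      have hb' : (a + 1) / (a - 1) - 1 ≠ 0 := sub_ne_zero.mpr hb
      simp only [op_ite, psi, if_neg ha, if_neg hb]
      congr 1
      rw [div_eq_iff hb']
      field_simp
      ring

lemma psi_theta (h3 : (3:F) = 0) (x : OnePoint F) : psi F (theta F x) = sMap F (psi F x) := by
  have h2 : (2:F) ≠ 0 := fun h => one_ne_zero (α := F) (by linear_combination h3 - h)
  rcases onePoint_cases x with rfl | ⟨a, rfl⟩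
  · simp [psi, theta, sMap, infty_eq]
  · by_cases ha0 : a = 0
    · subst ha0
      rw [show theta F (Option.some (0:F)) = Option.none by simp [theta, infty_eq]]
      rw [show psi F (Option.some (0:F)) = Option.some (-1 : F) by
            simp only [op_ite, psi, if_neg (show (0:F) ≠ 1 from fun h => one_ne_zero h.symm)]
            norm_num]
      rw [show sMap F (Option.some (-1:F)) = Option.some (1:F) by
            simp only [op_ite, sMap, if_neg (neg_ne_zero.mpr (one_ne_zero (α := F)))]
            norm_num]
      simp [psi]
    · by_cases ha1 : a = 1
      · subst ha1
        rw [show theta F (Option.some (1:F)) = Option.some (2:F) by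
              simp only [op_ite, theta, if_neg ha0]; norm_num]
        rw [show psi F (Option.some (2:F)) = Option.some (0:F) by
              simp only [op_ite, psi,
                if_neg (show (2:F) ≠ 1 from fun h => one_ne_zero (α := F) (by linear_combination h))]
              congr 1
              rw [show (2:F) - 1 = 1 by ring, div_one]
              linear_combination h3]
        rw [show psi F (Option.some (1:F)) = Option.none by simp [psi, infty_eq]]
        simp [sMap]
      · by_cases ham : a = -1
        · subst ham
          have hm1 : (-1:F) ≠ 1 := fun h => h2 (by linear_combination -h)
          rw [show theta F (Option.some (-1:F)) = Option.some (1:F) by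
                simp only [op_ite, theta, if_neg ha0]
                congr 1
                rw [inv_neg, inv_one]
                linear_combination -h3]
          rw [show psi F (Option.some (1:F)) = Option.none by simp [psi, infty_eq]]
          rw [show psi F (Option.some (-1:F)) = Option.some (0:F) by
                simp only [op_ite, psi, if_neg hm1]; norm_num]
          simp [sMap, infty_eq, psi]
        · -- generic case
          have ha1' : a - 1 ≠ 0 := sub_ne_zero.mpr ha1
          have ham' : a + 1 ≠ 0 := fun h => ham (by linear_combination h)
          have hb0 : (a + 1) / (a - 1) ≠ 0 := div_ne_zero ham' ha1'
          have haa : a + a⁻¹ ≠ 1 := by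
            intro h
            have h' : a * a + 1 = a := by field_simp at h; linear_combination h
            have h0 : (a + 1) ^ 2 = 0 := by linear_combination h' + a * h3
            exact ham' ((pow_eq_zero_iff (two_ne_zero)).mp h0)
          have hden : a + a⁻¹ - 1 ≠ 0 := sub_ne_zero.mpr haa
          simp only [op_ite, theta, if_neg ha0, psi, if_neg haa, if_neg ha1, sMap, if_neg hb0]
          congr 1
          rw [inv_div, div_pow, div_eq_div_iff hden (pow_ne_zero 2 ham')]
          field_simp
          linear_combination (2*a^3 + 2*a) * h3

lemma theta_iter (h3 : (3:F) = 0) (m : ℕ) (x : OnePoint F) :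
    (theta F)^[m] x = psi F ((sMap F)^[m] (psi F x)) := by
  have h2 : (2:F) ≠ 0 := fun h => one_ne_zero (α := F) (by linear_combination h3 - h)
  induction m generalizing x with
  | zero => simp [psi_psi h2]
  | succ m ih =>
    rw [Function.iterate_succ_apply, Function.iterate_succ_apply, ih (theta F x),
      psi_theta h3 x]

lemma sMap_iter_units (m : ℕ) (u : Fˣ) :
    (sMap F)^[m] (Option.some (u:F)) = Option.some ((u ^ ((-2:ℤ)^m) : Fˣ) : F) := by
  induction m generalizing u with
  | zero => simp; rfl
  | succ m ih =>
    erw [Function.iterate_succ_apply]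
    rw [show sMap F (Option.some (u:F)) = Option.some ((u ^ (-2:ℤ) : Fˣ) : F) by
          rw [show sMap F (Option.some (u:F)) = Option.some ((u:F)⁻¹^2) by
                simp [sMap, Units.ne_zero]]
          congr 1
          rw [Units.val_zpow_eq_zpow_val, zpow_neg, zpow_two, inv_pow, sq]]
    rw [ih (u ^ (-2:ℤ))]
    congr 2
    rw [← zpow_mul, ← pow_succ']

lemma sMap_iter_two (y : OnePoint F) (hy : y = Option.none ∨ y = Option.some (0:F)) :
    (sMap F)^[2] y = y := by
  have h1 : sMap F (Option.none) = Option.some (0:F) := rfl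
  have h2 : sMap F (Option.some (0:F)) = Option.none := by simp [sMap, infty_eq]
  rcases hy with rfl | rfl
  · erw [Function.iterate_succ_apply, Function.iterate_one, h1, h2]
  · erw [Function.iterate_succ_apply, Function.iterate_one, h2, h1]

end Aux

theorem eventually_periodic [Fintype F] (n : ℕ) (hn : 0 < n)
    (hF : Fintype.card F = 3 ^ n) (e : ℕ)
    (he : 2 ^ e ∣ 3 ^ n - 1 ∧ ¬ 2 ^ (e + 1) ∣ 3 ^ n - 1) :
    ∀ x : OnePoint F, ∃ i k : ℕ, i ≤ e ∧ 0 < k ∧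
      (theta F)^[i + k] x = (theta F)^[i] x := by
  -- characteristic 3
  have h3 : (3:F) = 0 := by
    obtain ⟨m, hm_prime, hm⟩ := FiniteField.card F (ringChar F)
    have h1 : ringChar F ∣ 3 ^ n := by
      rw [← hF, hm]; exact dvd_pow_self _ (by exact_mod_cast m.ne_zero)
    have h2 : ringChar F = 3 :=
      (Nat.prime_dvd_prime_iff_eq hm_prime Nat.prime_three).mp (hm_prime.dvd_of_dvd_pow h1)
    have := ringChar.spec F 3
    simp only [h2, dvd_refl, iff_true] at this
    exact_mod_cast this
  -- key periodicity in the unit group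
  have key : ∀ u : Fˣ, ∃ k : ℕ, 0 < k ∧ u ^ ((-2:ℤ)^(e+k)) = u ^ ((-2:ℤ)^e) := by
    intro u
    set m := (3 ^ n - 1) / 2 ^ e with hm
    have hme : 2 ^ e * m = 3 ^ n - 1 := Nat.mul_div_cancel' he.1
    have hmodd : m % 2 = 1 := by
      rcases Nat.even_or_odd m with ⟨t, ht⟩ | hodd
      · exact absurd ⟨t, by rw [← hme, ht]; ring⟩ he.2
      · exact Nat.odd_iff.mp hodd
    set v := u ^ ((-2:ℤ)^e) with hv
    have hvm : v ^ m = 1 := by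
      have h1' : u ^ (((3 ^ n - 1 : ℕ)) : ℤ) = 1 := by
        rw [zpow_natCast, ← hF, ← Fintype.card_units]; exact pow_card_eq_one
      have hcalc : v ^ (m : ℤ) = (u ^ (((3 ^ n - 1 : ℕ)) : ℤ)) ^ ((-1:ℤ)^e) := by
        rw [hv, ← zpow_mul, ← zpow_mul]
        congr 1
        rw [← hme]
        push_cast
        rw [show ((-2:ℤ)) = (-1) * 2 by norm_num, mul_pow]
        ring
      rw [← zpow_natCast v, hcalc, h1', one_zpow]
    have hdvd : orderOf v ∣ m := orderOf_dvd_of_pow_eq_one hvm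
    have hdodd : orderOf v % 2 = 1 := by
      rcases Nat.even_or_odd (orderOf v) with hev | hodd
      · exfalso
        obtain ⟨t, ht⟩ := hev
        obtain ⟨c, hc⟩ := (Dvd.intro t (by omega) : 2 ∣ orderOf v).trans hdvd
        omega
      · exact Nat.odd_iff.mp hodd
    set d := orderOf v with hd
    have hdpos : 0 < d := orderOf_pos v
    haveI : NeZero d := ⟨hdpos.ne'⟩
    have hcop : Nat.Coprime 2 d := (Nat.prime_two.coprime_iff_not_dvd).mpr (by omega)
    have hu2 : IsUnit (2 : ZMod d) := by
      have := (ZMod.isUnit_iff_coprime 2 d).mpr hcop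
      simpa using this
    have hu : IsUnit (-2 : ZMod d) := by simpa using hu2.neg
    obtain ⟨ζ, hζ⟩ := hu
    refine ⟨orderOf ζ, orderOf_pos ζ, ?_⟩
    have hζk : ((-2 : ZMod d)) ^ (orderOf ζ) = 1 := by
      rw [← hζ, ← Units.val_pow_eq_pow_val, pow_orderOf_eq_one, Units.val_one]
    have hdvd2 : (d:ℤ) ∣ (-2:ℤ)^(orderOf ζ) - 1 := by
      rw [← ZMod.intCast_zmod_eq_zero_iff_dvd]
      push_cast
      rw [hζk]
      ring
    obtain ⟨c, hc⟩ := hdvd2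
    have hvk : v ^ ((-2:ℤ)^(orderOf ζ)) = v := by
      rw [show ((-2:ℤ)^(orderOf ζ)) = (d:ℤ)*c + 1 by omega]
      rw [zpow_add, zpow_one, zpow_mul, zpow_natCast, hd, pow_orderOf_eq_one, one_zpow, one_mul]
    rw [pow_add, zpow_mul]
    exact hvk
  -- periodicity for sMap
  have skey : ∀ y : OnePoint F, ∃ k : ℕ, 0 < k ∧ (sMap F)^[e + k] y = (sMap F)^[e] y := by
    intro y
    rcases onePoint_cases y with rfl | ⟨a, rfl⟩
    · refine ⟨2, by norm_num, ?_⟩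
      erw [Function.iterate_add_apply, sMap_iter_two _ (Or.inl rfl)]
    · by_cases ha : a = 0
      · subst ha
        refine ⟨2, by norm_num, ?_⟩
        erw [Function.iterate_add_apply, sMap_iter_two _ (Or.inr rfl)]
      · obtain ⟨k, hk, hku⟩ := key (Units.mk0 a ha)
        refine ⟨k, hk, ?_⟩
        show (sMap F)^[e + k] (Option.some ((Units.mk0 a ha : Fˣ) : F)) =
          (sMap F)^[e] (Option.some ((Units.mk0 a ha : Fˣ) : F))
        rw [sMap_iter_units, sMap_iter_units, hku]
  -- transfer along the conjugation
  intro x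
  obtain ⟨k, hk, hks⟩ := skey (psi F x)
  exact ⟨e, k, le_refl e, hk, by rw [theta_iter h3, theta_iter h3, hks]⟩
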